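/- Let K ⊆ [0,1] be closed and μ > 0. Then there is a closed K' ⊆ K with λ(K \ K') < μ such that for every i ∈ ℕ there exists γ > 0 with Ξ_{1/(i+1), γ}(K', K'), i.e., for every Z with λ(Z) < γ, H^r(K' \ Z) > H^r(K') − 1/(i+1). -/

import Mathlib

open MeasureTheory Set ENNReal

/-- The `r`-Hausdorff capacity of a set `X ⊆ ℝ`: the infimum of `∑ λ(I i)^r`
over all countable covers of `X` by closed intervals. -/
noncomputable def Hcap (r : ℝ) (X : Set ℝ) : ℝ≥0∞ :=
  ⨅ (I : ℕ → Set ℝ) (_ : ∀ i, ∃ a b : ℝ, I i = Set.Icc a b) (_ : X ⊆ ⋃ i, I i),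
    ∑' i, (volume (I i)) ^ r

/-- The relation `Ξ_{δ,ε}(X,Y)`: for every `Z` of Lebesgue (outer) measure less than `ε`,
`H^r(X ∩ Y \ Z) > H^r(Y) − δ` (phrased additively to avoid truncated subtraction). -/
def Xi (r δ ε : ℝ) (X Y : Set ℝ) : Prop :=
  ∀ Z : Set ℝ, volume Z < ENNReal.ofReal ε →
    Hcap r Y < Hcap r ((X ∩ Y) \ Z) + ENNReal.ofReal δ

lemma Hcap_mono (r : ℝ) {X Y : Set ℝ} (hXY : X ⊆ Y) : Hcap r X ≤ Hcap r Y := by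
  refine le_iInf fun I => le_iInf fun hI => le_iInf fun hcov => ?_
  exact iInf_le_of_le I <| iInf_le_of_le hI <| iInf_le_of_le (hXY.trans hcov) le_rfl

lemma Hcap_le_one (r : ℝ) (hr : 0 < r) {X : Set ℝ} (hX : X ⊆ Icc 0 1) : Hcap r X ≤ 1 := by
  classical
  set I : ℕ → Set ℝ := fun i => if i = 0 then Icc (0:ℝ) 1 else Icc 1 1 with hI
  have h1 : ∀ i, ∃ a b : ℝ, I i = Icc a b := by
    intro i; by_cases h : i = 0
    · exact ⟨0, 1, by simp [hI, h]⟩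
    · exact ⟨1, 1, by simp [hI, h]⟩
  have h2 : X ⊆ ⋃ i, I i := fun x hx => mem_iUnion.2 ⟨0, by simpa [hI] using hX hx⟩
  have h3 : Hcap r X ≤ ∑' i, (volume (I i)) ^ r :=
    iInf_le_of_le I <| iInf_le_of_le h1 <| iInf_le_of_le h2 le_rfl
  have h4 : ∑' i, (volume (I i)) ^ r = 1 := by
    rw [tsum_eq_single 0]
    · simp [hI, Real.volume_Icc]
    · intro b hb
      simp [hI, hb, Real.volume_Icc, ENNReal.zero_rpow_of_pos hr]
  rw [h4] at h3; exact h3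

lemma tsum_half_pow (c : ℝ≥0∞) (k : ℕ) :
    ∑' n : ℕ, c * (2:ℝ≥0∞)⁻¹ ^ (n + (k+1)) = c * (2:ℝ≥0∞)⁻¹ ^ k := by
  have h2 : ∑' n : ℕ, (2:ℝ≥0∞)⁻¹ ^ n = 2 := by
    rw [ENNReal.tsum_geometric, ENNReal.one_sub_inv_two, inv_inv]
  calc ∑' n : ℕ, c * (2:ℝ≥0∞)⁻¹ ^ (n + (k+1))
      = ∑' n : ℕ, (c * (2:ℝ≥0∞)⁻¹^(k+1)) * (2:ℝ≥0∞)⁻¹^n := by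
        refine tsum_congr fun n => by ring
    _ = (c * (2:ℝ≥0∞)⁻¹^(k+1)) * ∑' n : ℕ, (2:ℝ≥0∞)⁻¹^n := ENNReal.tsum_mul_left
    _ = c * ((2:ℝ≥0∞)⁻¹^k * ((2:ℝ≥0∞)⁻¹ * 2)) := by rw [h2]; ring
    _ = c * (2:ℝ≥0∞)⁻¹^k := by
        rw [ENNReal.inv_mul_cancel (by norm_num) (by norm_num), mul_one]

lemma ofReal_half : ENNReal.ofReal (1/2 : ℝ) = (2:ℝ≥0∞)⁻¹ := by
  rw [ENNReal.ofReal_div_of_pos (by norm_num), ENNReal.ofReal_one, ENNReal.ofReal_ofNat, one_div]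

lemma step_lemma (r : ℝ) (hr0 : 0 < r) (C : Set ℝ) (hCc : IsClosed C) (hC1 : C ⊆ Icc 0 1)
    (ν δ : ℝ) (hν : 0 < ν) (hδ : 0 < δ) :
    ∃ C' γ, IsClosed C' ∧ C' ⊆ C ∧ volume (C \ C') ≤ ENNReal.ofReal ν ∧ 0 < γ ∧
      ∀ Z : Set ℝ, volume Z < ENNReal.ofReal γ →
        Hcap r C' < Hcap r (C' \ Z) + ENNReal.ofReal δ := by
  classical
  set h : ℝ≥0∞ → ℝ≥0∞ := fun t =>
    sInf {v | ∃ F : Set ℝ, IsClosed F ∧ F ⊆ C ∧ volume (C \ F) ≤ t ∧ Hcap r F = v} with hh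
  have h_le : ∀ t, h t ≤ Hcap r C := fun t => sInf_le ⟨C, hCc, subset_rfl, by simp, rfl⟩
  have h_le_one : ∀ t, h t ≤ 1 := fun t => (h_le t).trans (Hcap_le_one r hr0 hC1)
  set c := ENNReal.ofReal (δ/2) with hc
  have hcpos : 0 < c := ENNReal.ofReal_pos.2 (by linarith)
  have hcne : c ≠ ⊤ := ofReal_ne_top
  set a : ℕ → ℝ≥0∞ := fun j => h (ENNReal.ofReal (ν * (1/2)^(j+1))) with ha
  have key : ∃ j : ℕ, h (ENNReal.ofReal (ν * (1/2)^(j+2))) < a j + c := by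
    by_contra hcon
    push_neg at hcon
    have hcon' : ∀ j, a j + c ≤ a (j+1) := fun j => hcon j
    have grow : ∀ j : ℕ, (j : ℝ≥0∞) * c ≤ a j := by
      intro j; induction j with
      | zero => simp
      | succ n ih =>
        calc ((n+1 : ℕ) : ℝ≥0∞) * c = (n:ℝ≥0∞)*c + c := by push_cast; ring
          _ ≤ a n + c := add_le_add_left ih c
          _ ≤ a (n+1) := hcon' n
    obtain ⟨N, hN⟩ := exists_nat_gt (2/δ)
    have h1 : (1:ℝ≥0∞) < (N:ℝ≥0∞) * c := by
      have hr2 : (1:ℝ) < N * (δ/2) := by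
        rw [div_lt_iff₀ hδ] at hN
        nlinarith
      calc (1:ℝ≥0∞) = ENNReal.ofReal 1 := ENNReal.ofReal_one.symm
        _ < ENNReal.ofReal ((N:ℝ) * (δ/2)) := (ENNReal.ofReal_lt_ofReal_iff (by positivity)).2 hr2
        _ = (N:ℝ≥0∞) * c := by rw [ENNReal.ofReal_mul (by positivity), ENNReal.ofReal_natCast]
    exact (not_le.mpr h1) ((grow N).trans (h_le_one _))
  obtain ⟨j, hj⟩ := key
  set t : ℝ := ν * (1/2)^(j+2) with htdef
  have ht0 : 0 < t := by positivity
  have htsum : t + t = ν * (1/2)^(j+1) := by rw [htdef]; ring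
  have hfin : h (ENNReal.ofReal t) ≠ ⊤ := ((h_le_one _).trans_lt one_lt_top).ne
  have hlt : h (ENNReal.ofReal t) < h (ENNReal.ofReal t) + c :=
    ENNReal.lt_add_right hfin hcpos.ne'
  have hlt' : sInf {v | ∃ F : Set ℝ, IsClosed F ∧ F ⊆ C ∧
      volume (C \ F) ≤ ENNReal.ofReal t ∧ Hcap r F = v} < h (ENNReal.ofReal t) + c := hlt
  obtain ⟨v, ⟨F, hFc, hFC, hFm, rfl⟩, hv⟩ := sInf_lt_iff.1 hlt'
  refine ⟨F, t, hFc, hFC, ?_, ht0, ?_⟩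
  · refine hFm.trans (ENNReal.ofReal_le_ofReal ?_)
    have : (1/2:ℝ)^(j+2) ≤ 1 := pow_le_one₀ (by norm_num) (by norm_num)
    calc t ≤ ν * 1 := by rw [htdef]; exact mul_le_mul_of_nonneg_left this hν.le
      _ = ν := mul_one ν
  · intro Z hZ
    obtain ⟨U, hZU, hUopen, hUvol⟩ := Z.exists_isOpen_lt_of_lt _ hZ
    have hF'c : IsClosed (F \ U) := hFc.sdiff hUopen
    have hF'm : volume (C \ (F \ U)) ≤ ENNReal.ofReal (ν * (1/2)^(j+1)) := by
      have hsub : C \ (F \ U) ⊆ (C \ F) ∪ U := by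
        intro x hx
        by_cases hxF : x ∈ F
        · right
          by_contra hxU
          exact hx.2 ⟨hxF, hxU⟩
        · exact Or.inl ⟨hx.1, hxF⟩
      calc volume (C \ (F \ U)) ≤ volume ((C \ F) ∪ U) := measure_mono hsub
        _ ≤ volume (C \ F) + volume U := measure_union_le _ _
        _ ≤ ENNReal.ofReal t + ENNReal.ofReal t := add_le_add hFm hUvol.le
        _ = ENNReal.ofReal (t + t) := (ENNReal.ofReal_add ht0.le ht0.le).symm
        _ = ENNReal.ofReal (ν * (1/2)^(j+1)) := by rw [htsum]
    have hlow : a j ≤ Hcap r (F \ U) := sInf_le ⟨F \ U, hF'c, (diff_subset.trans hFC), hF'm, rfl⟩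
    have hmono : Hcap r (F \ U) ≤ Hcap r (F \ Z) := Hcap_mono r (diff_subset_diff_right hZU)
    calc Hcap r F < h (ENNReal.ofReal t) + c := hv
      _ < (a j + c) + c := ENNReal.add_lt_add_right hcne hj
      _ ≤ (Hcap r (F \ Z) + c) + c := by
          exact add_le_add_left (add_le_add_left (hlow.trans hmono) c) c
      _ = Hcap r (F \ Z) + (c + c) := by ring
      _ = Hcap r (F \ Z) + ENNReal.ofReal δ := by
          rw [hc, ← ENNReal.ofReal_add (by linarith) (by linarith)]
          norm_num

theorem exists_stable_closed_subset (r : ℝ) (hr0 : 0 < r) (hr1 : r < 1)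
    (K : Set ℝ) (hKc : IsClosed K) (hK : K ⊆ Set.Icc 0 1) (μ : ℝ) (hμ : 0 < μ) :
    ∃ K' : Set ℝ, K' ⊆ K ∧ IsClosed K' ∧ volume (K \ K') < ENNReal.ofReal μ ∧
      ∀ i : ℕ, ∃ γ > 0, Xi r (1 / (i + 1)) γ K' K' := by
  classical
  set q : ℝ≥0∞ := (2:ℝ≥0∞)⁻¹ with hq
  -- state: (C, γ, b)
  let St := Set ℝ × ℝ × ℝ
  let Inv : St → Prop := fun p => IsClosed p.1 ∧ p.1 ⊆ K ∧ 0 < p.2.2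
  let Rel : ℕ → St → St → Prop := fun n p p' =>
    p'.1 ⊆ p.1 ∧
    volume (p.1 \ p'.1) ≤ ENNReal.ofReal (min p.2.2 μ) * q^(n+2) ∧
    0 < p'.2.1 ∧
    (∀ Z : Set ℝ, volume Z < ENNReal.ofReal p'.2.1 →
       Hcap r p'.1 < Hcap r (p'.1 \ Z) + ENNReal.ofReal (1/((n:ℝ)+1))) ∧
    p'.2.2 ≤ p.2.2 ∧ p'.2.2 ≤ p'.2.1
  have exists_next : ∀ (n : ℕ) (p : St), Inv p → ∃ p', Inv p' ∧ Rel n p p' := by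
    intro n p hp
    obtain ⟨hCc, hCK, hb⟩ := hp
    have hminpos : 0 < min p.2.2 μ := lt_min hb hμ
    have hν : 0 < min p.2.2 μ * (1/2:ℝ)^(n+2) := by positivity
    have hδ : 0 < 1/((n:ℝ)+1) := by positivity
    obtain ⟨C', γ', h1, h2, h3, h4, h5⟩ :=
      step_lemma r hr0 p.1 hCc (hCK.trans hK) _ _ hν hδ
    have hconv : ENNReal.ofReal (min p.2.2 μ * (1/2:ℝ)^(n+2))
        = ENNReal.ofReal (min p.2.2 μ) * q^(n+2) := by
      rw [ENNReal.ofReal_mul hminpos.le, ENNReal.ofReal_pow (by norm_num), ofReal_half]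
    exact ⟨(C', γ', min p.2.2 γ'),
      ⟨h1, h2.trans hCK, lt_min hb h4⟩,
      h2, by rw [← hconv]; exact h3, h4, h5, min_le_left _ _, min_le_right _ _⟩
  let f : ℕ → {p : St // Inv p} := fun n => Nat.rec
    ⟨(K, 1, 1), ⟨hKc, subset_rfl, one_pos⟩⟩
    (fun n p => ⟨(exists_next n p.1 p.2).choose, (exists_next n p.1 p.2).choose_spec.1⟩) n
  have hfs : ∀ n, Rel n (f n).1 (f (n+1)).1 := fun n =>
    (exists_next n (f n).1 (f n).2).choose_spec.2
  set C : ℕ → Set ℝ := fun n => (f n).1.1 with hC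
  set gam : ℕ → ℝ := fun n => (f n).1.2.1 with hgam
  set b : ℕ → ℝ := fun n => (f n).1.2.2 with hb
  have hC0 : C 0 = K := rfl
  have hInv : ∀ n, IsClosed (C n) ∧ C n ⊆ K ∧ 0 < b n := fun n => (f n).2
  have hsub : ∀ n, C (n+1) ⊆ C n := fun n => (hfs n).1
  have hmeas : ∀ n, volume (C n \ C (n+1)) ≤ ENNReal.ofReal (min (b n) μ) * q^(n+2) :=
    fun n => (hfs n).2.1
  have hγpos : ∀ n, 0 < gam (n+1) := fun n => (hfs n).2.2.1
  have hXi : ∀ n, ∀ Z : Set ℝ, volume Z < ENNReal.ofReal (gam (n+1)) →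
      Hcap r (C (n+1)) < Hcap r (C (n+1) \ Z) + ENNReal.ofReal (1/((n:ℝ)+1)) :=
    fun n => (hfs n).2.2.2.1
  have hble : ∀ n, b (n+1) ≤ b n := fun n => (hfs n).2.2.2.2.1
  have hbγ : ∀ n, b (n+1) ≤ gam (n+1) := fun n => (hfs n).2.2.2.2.2
  -- monotone chains
  have hsub' : ∀ m k, C (m+k) ⊆ C m := by
    intro m k; induction k with
    | zero => exact subset_rfl
    | succ n ih => exact (hsub (m+n)).trans ih
  have hble' : ∀ m k, b (m+k) ≤ b m := by
    intro m k; induction k with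
    | zero => exact le_rfl
    | succ n ih => exact (hble (m+n)).trans ih
  have hsub'' : ∀ {m n}, m ≤ n → C n ⊆ C m := by
    intro m n hmn
    obtain ⟨k, rfl⟩ := Nat.exists_eq_add_of_le hmn
    exact hsub' m k
  set K' : Set ℝ := ⋂ n, C n with hK'
  have hK'K : K' ⊆ K := hC0 ▸ iInter_subset C 0
  have hK'c : IsClosed K' := isClosed_iInter fun n => (hInv n).1
  -- escape lemma
  have escape : ∀ j, C j \ K' ⊆ ⋃ m, (C (j+m) \ C (j+m+1)) := by
    intro j x hx
    by_contra hnot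
    simp only [mem_iUnion, not_exists, mem_diff, not_and, not_not] at hnot
    have hall : ∀ m, x ∈ C (j+m) := by
      intro m; induction m with
      | zero => exact hx.1
      | succ n ih => exact hnot n ih
    apply hx.2
    refine mem_iInter.2 fun n => ?_
    rcases le_total n j with hnj | hjn
    · exact hsub'' hnj hx.1
    · obtain ⟨k, rfl⟩ := Nat.exists_eq_add_of_le hjn
      exact hall k
  -- measure of K \ K'
  have hKdiff : volume (K \ K') < ENNReal.ofReal μ := by
    have h1 : K \ K' ⊆ ⋃ m, (C m \ C (m+1)) := by
      intro x hx
      have := escape 0 (by rw [hC0]; exact hx)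
      simpa using this
    have h2 : volume (K \ K') ≤ ∑' m, volume (C m \ C (m+1)) :=
      (measure_mono h1).trans (measure_iUnion_le _)
    have h3 : ∀ m : ℕ, volume (C m \ C (m+1)) ≤ ENNReal.ofReal μ * q^(m+(1+1)) := by
      intro m
      refine (hmeas m).trans ?_
      have : ENNReal.ofReal (min (b m) μ) ≤ ENNReal.ofReal μ :=
        ENNReal.ofReal_le_ofReal (min_le_right _ _)
      rw [show m+(1+1) = m+2 by ring]
      exact mul_le_mul_of_nonneg_right this zero_le
    have h4 : volume (K \ K') ≤ ENNReal.ofReal μ * q^1 := by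
      rw [← tsum_half_pow (ENNReal.ofReal μ) 1]
      exact h2.trans (ENNReal.tsum_le_tsum h3)
    have h5 : ENNReal.ofReal μ * q^1 < ENNReal.ofReal μ := by
      rw [pow_one, hq, ← div_eq_mul_inv]
      exact ENNReal.half_lt_self (by simpa using hμ) ofReal_ne_top
    exact h4.trans_lt h5
  refine ⟨K', hK'K, hK'c, hKdiff, ?_⟩
  intro i
  have hγ1 : 0 < gam (i+1) := hγpos i
  refine ⟨gam (i+1) / 2, by linarith, ?_⟩
  intro Z hZ
  rw [Set.inter_self]
  set g : ℝ≥0∞ := ENNReal.ofReal (gam (i+1)) with hg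
  have hgne : g ≠ 0 := (ENNReal.ofReal_pos.2 hγ1).ne'
  have e1 : ENNReal.ofReal (gam (i+1)/2) = g / 2 := by
    rw [hg, ENNReal.ofReal_div_of_pos (by norm_num), ENNReal.ofReal_ofNat]
  have hZ' : volume Z < g / 2 := by rw [e1] at hZ; exact hZ
  set W : Set ℝ := C (i+1) \ K' with hW
  have hWbound : volume W ≤ g * q^(i+2) := by
    have h1 : volume W ≤ ∑' m, volume (C (i+1+m) \ C (i+1+m+1)) :=
      (measure_mono (escape (i+1))).trans (measure_iUnion_le _)
    have h2 : ∀ m : ℕ, volume (C (i+1+m) \ C (i+1+m+1)) ≤ g * q^(m+((i+2)+1)) := by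
      intro m
      calc volume (C (i+1+m) \ C (i+1+m+1))
          ≤ ENNReal.ofReal (min (b (i+1+m)) μ) * q^(i+1+m+2) := hmeas (i+1+m)
        _ ≤ g * q^(i+1+m+2) := by
            refine mul_le_mul_of_nonneg_right (ENNReal.ofReal_le_ofReal ?_) zero_le
            exact (min_le_left _ _).trans ((hble' (i+1) m).trans (hbγ i))
        _ = g * q^(m+((i+2)+1)) := by rw [show i+1+m+2 = m+((i+2)+1) from by omega]
    calc volume W ≤ ∑' m, g * q^(m+((i+2)+1)) := h1.trans (ENNReal.tsum_le_tsum h2)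
      _ = g * q^(i+2) := tsum_half_pow g (i+2)
  have hq1 : q ≤ 1 := by rw [hq]; exact ENNReal.inv_le_one.2 one_le_two
  have hWle : volume W ≤ g * q := by
    refine hWbound.trans (mul_le_mul_of_nonneg_left ?_ zero_le)
    calc q^(i+2) ≤ q^1 := pow_le_pow_of_le_one zero_le hq1 (by omega)
      _ = q := pow_one q
  have hgqne : g * q ≠ ⊤ := ENNReal.mul_ne_top ofReal_ne_top (by rw [hq]; norm_num)
  have hZW : volume (Z ∪ W) < g := by
    calc volume (Z ∪ W) ≤ volume Z + volume W := measure_union_le _ _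
      _ ≤ volume Z + g * q := add_le_add_right hWle _
      _ < g/2 + g*q := ENNReal.add_lt_add_right hgqne hZ'
      _ = g := by rw [hq, ← div_eq_mul_inv, ENNReal.add_halves]
  have hfinal := hXi i (Z ∪ W) hZW
  have hsubfin : C (i+1) \ (Z ∪ W) ⊆ K' \ Z := by
    intro x hx
    refine ⟨?_, fun hxZ => hx.2 (Or.inl hxZ)⟩
    by_contra hxK'
    exact hx.2 (Or.inr ⟨hx.1, hxK'⟩)
  calc Hcap r K' ≤ Hcap r (C (i+1)) := Hcap_mono r (iInter_subset C (i+1))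
    _ < Hcap r (C (i+1) \ (Z ∪ W)) + ENNReal.ofReal (1/((i:ℝ)+1)) := hfinal
    _ ≤ Hcap r (K' \ Z) + ENNReal.ofReal (1/((i:ℝ)+1)) :=
        add_le_add_left (Hcap_mono r hsubfin) _
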